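/- For every integer n ≥ 1, the number of flattened Catalan words of length n avoiding the consecutive pattern 122 is f_n(122) = Σ_{r=0}^{⌊(n−1)/2⌋} C(n+r, 3r+1). -/

import Mathlib

open scoped BigOperators

/-- `w` is a Catalan word: it is nonempty, starts with `1`, and each subsequent
letter lies between `1` and the previous letter plus one. -/
def IsCatalan (w : List ℕ) : Prop :=
  w ≠ [] ∧ w.getD 0 0 = 1 ∧
    ∀ i, i + 1 < w.length →
      1 ≤ w.getD (i + 1) 0 ∧ w.getD (i + 1) 0 ≤ w.getD i 0 + 1

/-- `i` is the starting index of a maximal weakly increasing run of `w`. -/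
def RunStart (w : List ℕ) (i : ℕ) : Prop :=
  i < w.length ∧ (i = 0 ∨ w.getD i 0 < w.getD (i - 1) 0)

/-- `w` is flattened: the first letters of its increasing runs, read left to
right, form a weakly nondecreasing sequence. -/
def IsFlattened (w : List ℕ) : Prop :=
  ∀ i j, RunStart w i → RunStart w j → i ≤ j → w.getD i 0 ≤ w.getD j 0

/-- The set of flattened Catalan words of length `n`. -/
def FlatCat (n : ℕ) : Set (List ℕ) :=
  {w | w.length = n ∧ IsCatalan w ∧ IsFlattened w}

/-- `i` is the starting index of an occurrence of the consecutive pattern `τ`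
in the word `w`, i.e. the factor of `w` of length `|τ|` starting at `i` is
order-isomorphic to `τ`. -/
def OccAt (τ w : List ℕ) (i : ℕ) : Prop :=
  i + τ.length ≤ w.length ∧
    ∀ s < τ.length, ∀ t < τ.length,
      (w.getD (i + s) 0 < w.getD (i + t) 0 ↔ τ.getD s 0 < τ.getD t 0)

/-- The number of occurrences of the consecutive pattern `τ` in `w`. -/
noncomputable def numOcc (τ w : List ℕ) : ℕ :=
  Set.ncard {i | OccAt τ w i}

/-- The number of distinct letters in the terminal (rightmost) increasing run
of `w`, i.e. in the longest weakly increasing suffix of `w`. -/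
noncomputable def trun (w : List ℕ) : ℕ :=
  ((w.drop (sInf {i | List.Chain' (· ≤ ·) (w.drop i)})).toFinset).card

/-- The total number of occurrences of the consecutive pattern `τ` over all
flattened Catalan words of length `n`. -/
noncomputable def tot (n : ℕ) (τ : List ℕ) : ℕ :=
  ∑ᶠ w ∈ FlatCat n, numOcc τ w

open List

def gg (w : List ℕ) (i : ℕ) : ℕ := w.getD i 0

def runW (m u t : ℕ) : List ℕ :=
  List.replicate (u+1) m ++ (List.range t).map (fun i => m + i + 1)

lemma runW_length (m u t : ℕ) : (runW m u t).length = u + 1 + t := by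
  simp [runW]

lemma listext {v w : List ℕ} (h : v.length = w.length)
    (h2 : ∀ i < v.length, gg v i = gg w i) : v = w := by
  apply List.ext_getElem h
  intro n h1 h2'
  have := h2 n h1
  rwa [gg, gg, List.getD_eq_getElem _ _ h1, List.getD_eq_getElem _ _ h2'] at this

lemma gg_drop (w : List ℕ) (a i : ℕ) : gg (w.drop a) i = gg w (a + i) := by
  simp [gg, List.getD_eq_getElem?_getD, List.getElem?_drop]

lemma runW_getD {m u t i : ℕ} (h : i < u + 1 + t) : gg (runW m u t) i = m + (i - u) := by
  unfold runW gg
  rcases lt_or_ge i (u+1) with hi | hi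
  · rw [List.getD_append _ _ _ _ (by simpa using hi)]
    have : i - u = 0 := by omega
    rw [this]
    simp [List.getD_eq_getElem?_getD, List.getElem?_replicate, if_pos hi, show i ≤ u by omega]
  · rw [List.getD_append_right _ _ _ _ (by simpa using hi)]
    have hlt : i - (u+1) < t := by omega
    rw [List.getD_eq_getElem _ _ (by simpa using hlt)]
    simp only [List.getElem_map, List.getElem_range, List.length_replicate]
    omega

def build : ℕ → List ℕ → List ℕ
  | m, [u, t] => runW m u t
  | m, u :: d :: s :: rest => runW m u (d+1+s) ++ build (m+d) rest
  | _, _ => []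

def Valid (P : List ℕ) : Prop := ∃ r, P.length = 3*r + 2

lemma valid_two (u t : ℕ) : Valid [u, t] := ⟨0, rfl⟩
lemma valid_cons {rest : List ℕ} (u d s : ℕ) (h : Valid rest) : Valid (u :: d :: s :: rest) := by
  obtain ⟨r, hr⟩ := h; exact ⟨r+1, by simp [hr]; ring⟩

lemma valid_cons_iff {rest : List ℕ} (u d s : ℕ) :
    Valid (u :: d :: s :: rest) ↔ Valid rest := by
  constructor
  · rintro ⟨r, hr⟩
    rcases r with _ | r
    · simp at hr
    · exact ⟨r, by simp at hr; omega⟩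
  · exact valid_cons u d s

lemma build_two (m u t : ℕ) : build m [u, t] = runW m u t := rfl
lemma build_cons (m u d s : ℕ) (rest : List ℕ) :
    build m (u :: d :: s :: rest) = runW m u (d+1+s) ++ build (m+d) rest := by
  cases rest <;> rfl

lemma build_length : ∀ (P : List ℕ) (m r : ℕ), P.length = 3*r + 2 →
    (build m P).length = P.sum + 2*r + 1
  | [u, t], m, r, h => by
    have : r = 0 := by simp at h; omega
    subst this
    simp [build_two, runW_length]; ring
  | u :: d :: s :: rest, m, r, h => by
    rcases r with _ | r
    · simp at h
    · have hrest : rest.length = 3*r + 2 := by simp at h; omega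
      rw [build_cons]
      simp only [List.length_append, runW_length, build_length rest (m+d) r hrest, List.sum_cons]
      ring

lemma build_ne_nil {P : List ℕ} (hP : Valid P) (m : ℕ) : build m P ≠ [] := by
  obtain ⟨r, hr⟩ := hP
  have := build_length P m r hr
  intro h
  rw [h] at this
  simp at this

lemma build_pos_len {P : List ℕ} (hP : Valid P) (m : ℕ) : 0 < (build m P).length :=
  List.length_pos_iff.2 (build_ne_nil hP m)

lemma build_getD_zero : ∀ (P : List ℕ), Valid P → ∀ m, gg (build m P) 0 = m
  | [u, t], _, m => by
    rw [build_two, runW_getD (by omega)]; omega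
  | u :: d :: s :: rest, h, m => by
    rw [build_cons]
    unfold gg
    rw [List.getD_append _ _ _ _ (by rw [runW_length]; omega)]
    have := runW_getD (m := m) (u := u) (t := d+1+s) (i := 0) (by omega)
    unfold gg at this
    rw [this]; omega
  | [], h, m => by obtain ⟨r, hr⟩ := h; simp at hr
  | [u], h, m => by obtain ⟨r, hr⟩ := h; simp at hr

def StepOK (w : List ℕ) : Prop := ∀ i, i + 1 < w.length → gg w (i+1) ≤ gg w i + 1

def NoPat (w : List ℕ) : Prop :=
  ∀ i, i + 2 < w.length → ¬(gg w i < gg w (i+1) ∧ gg w (i+1) = gg w (i+2))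

def GeAll (m : ℕ) (w : List ℕ) : Prop := ∀ i, i < w.length → m ≤ gg w i

lemma runW_runstart {m u t i : ℕ} (h : RunStart (runW m u t) i) : i = 0 := by
  obtain ⟨hlen, h0 | hd⟩ := h
  · exact h0
  · rw [runW_length] at hlen
    by_contra hne
    have h1 : gg (runW m u t) i = m + (i - u) := runW_getD hlen
    have h2 : gg (runW m u t) (i-1) = m + (i - 1 - u) := runW_getD (by omega)
    unfold gg at h1 h2
    omega

lemma build_sound : ∀ (P : List ℕ), Valid P → ∀ m,
    GeAll m (build m P) ∧ StepOK (build m P) ∧ NoPat (build m P) ∧ IsFlattened (build m P)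
  | [], h, m => by obtain ⟨r, hr⟩ := h; simp at hr
  | [u], h, m => by obtain ⟨r, hr⟩ := h; simp at hr
  | [u, t], _, m => by
    rw [build_two]
    have hlen := runW_length m u t
    have hval : ∀ i < u + 1 + t, gg (runW m u t) i = m + (i - u) := fun i hi => runW_getD hi
    refine ⟨?_, ?_, ?_, ?_⟩
    · intro i hi; rw [hval i (by omega)]; omega
    · intro i hi; rw [hval i (by omega), hval (i+1) (by omega)]; omega
    · intro i hi; rw [hval i (by omega), hval (i+1) (by omega), hval (i+2) (by omega)]; omega
    · intro i j hi hj _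
      rw [runW_runstart hi, runW_runstart hj]
  | u :: d :: s :: rest, h, m => by
    have hrest : Valid rest := (valid_cons_iff u d s).1 h
    obtain ⟨hge', hstep', hnp', hfl'⟩ := build_sound rest hrest (m+d)
    rw [build_cons]
    set T := d + 1 + s with hT
    set A := u + 1 + T with hA
    set w' := build (m+d) rest with hw'
    set w := runW m u T ++ w' with hw
    have hL' : 0 < w'.length := build_pos_len hrest (m+d)
    have hlen : w.length = A + w'.length := by rw [hw, List.length_append, runW_length]
    have h0' : gg w' 0 = m + d := build_getD_zero rest hrest (m+d)
    have hval : ∀ i < A, gg w i = m + (i - u) := by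
      intro i hi
      rw [hw]; unfold gg
      rw [List.getD_append _ _ _ _ (by rw [runW_length]; exact hi)]
      exact runW_getD hi
    have hval' : ∀ i, A ≤ i → gg w i = gg w' (i - A) := by
      intro i hi
      rw [hw]; unfold gg
      rw [List.getD_append_right _ _ _ _ (by rw [runW_length]; exact hi), runW_length]
    have hge : GeAll m w := by
      intro i hi
      rcases lt_or_ge i A with hiA | hiA
      · rw [hval i hiA]; omega
      · rw [hval' i hiA]
        have := hge' (i - A) (by omega)
        omega
    refine ⟨hge, ?_, ?_, ?_⟩
    · -- StepOK
      intro i hi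
      rcases lt_or_ge (i+1) A with hiA | hiA
      · rw [hval i (by omega), hval (i+1) hiA]; omega
      · rcases eq_or_lt_of_le hiA with hiA' | hiA'
        · rw [hval i (by omega), hval' (i+1) (by omega), ← hiA']
          simp only [Nat.sub_self]
          rw [h0']
          omega
        · rw [hval' i (by omega), hval' (i+1) (by omega)]
          have : i + 1 - A = (i - A) + 1 := by omega
          rw [this]
          exact hstep' (i - A) (by omega)
    · -- NoPat
      intro i hi
      rcases lt_or_ge (i+2) A with hiA | hiA
      · rw [hval i (by omega), hval (i+1) (by omega), hval (i+2) hiA]; omega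
      · rcases eq_or_lt_of_le hiA with hiA' | hiA'
        · -- i+2 = A
          rw [hval i (by omega), hval (i+1) (by omega), hval' (i+2) (by omega), ← hiA']
          simp only [Nat.sub_self]
          rw [h0']
          omega
        · rcases eq_or_lt_of_le (show A ≤ i + 1 by omega) with hiA'' | hiA''
          · -- i+1 = A
            rw [hval i (by omega), hval' (i+1) (by omega), ← hiA'']
            simp only [Nat.sub_self]
            rw [h0']
            omega
          · -- i ≥ A
            rw [hval' i (by omega), hval' (i+1) (by omega), hval' (i+2) (by omega)]
            have e1 : i + 1 - A = (i - A) + 1 := by omega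
            have e2 : i + 2 - A = (i - A) + 2 := by omega
            rw [e1, e2]
            exact hnp' (i - A) (by omega)
    · -- IsFlattened
      have hrs : ∀ i, RunStart w i → i = 0 ∨ (A ≤ i ∧ RunStart w' (i - A)) := by
        rintro i ⟨hilen, h0 | hdsc⟩
        · exact Or.inl h0
        · change gg w i < gg w (i-1) at hdsc
          rcases lt_or_ge i A with hiA | hiA
          · exfalso
            rw [hval i hiA, hval (i-1) (by omega)] at hdsc
            omega
          · refine Or.inr ⟨hiA, ?_, ?_⟩
            · rw [hlen] at hilen; omega
            · rcases eq_or_lt_of_le hiA with hE | hGT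
              · exact Or.inl (by omega)
              · refine Or.inr ?_
                change gg w' (i - A) < gg w' (i - A - 1)
                rw [← hval' i hiA, show i - A - 1 = (i-1) - A by omega, ← hval' (i-1) (by omega)]
                exact hdsc
      intro i j hi hj hij
      change gg w i ≤ gg w j
      rcases hrs j hj with rfl | ⟨hjA, hj'⟩
      · have : i = 0 := by omega
        subst this; rfl
      · rcases hrs i hi with rfl | ⟨hiA, hi'⟩
        · rw [hval 0 (by omega)]
          simp only [Nat.zero_sub, Nat.add_zero]
          exact hge j hj.1
        · rw [hval' i hiA, hval' j hjA]
          exact hfl' _ _ hi' hj' (by omega)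

lemma append_val_left {a b : List ℕ} {i : ℕ} (h : i < a.length) : gg (a ++ b) i = gg a i :=
  List.getD_append _ _ _ _ h

lemma append_val_right {a b : List ℕ} {i : ℕ} (h : a.length ≤ i) :
    gg (a ++ b) i = gg b (i - a.length) :=
  List.getD_append_right _ _ _ _ h

lemma run_ne_consbuild (m u t u' d' s' : ℕ) {rest' : List ℕ} (h : Valid rest') :
    runW m u t ≠ runW m u' (d'+1+s') ++ build (m+d') rest' := by
  intro hEq
  set T' := d' + 1 + s' with hT'
  set A' := u' + 1 + T' with hA'
  set w2 := build (m+d') rest' with hw2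
  have hL2 : 0 < w2.length := build_pos_len h (m+d')
  have hlen : u + 1 + t = A' + w2.length := by
    have := congrArg List.length hEq
    rwa [runW_length, List.length_append, runW_length] at this
  have h1 : gg (runW m u t) (A'-1) = m + (A'-1-u) := runW_getD (by omega)
  have h2 : gg (runW m u t) A' = m + (A'-u) := runW_getD (by omega)
  have h1' : gg (runW m u' T' ++ w2) (A'-1) = m + T' := by
    rw [append_val_left (by rw [runW_length]; omega), runW_getD (by omega)]
    omega
  have h2' : gg (runW m u' T' ++ w2) A' = m + d' := by
    rw [append_val_right (by rw [runW_length])]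
    rw [runW_length]
    simp only [hA', hT', Nat.sub_self]
    exact build_getD_zero rest' h (m+d')
  rw [hEq] at h1 h2
  omega

lemma build_inj : ∀ (P : List ℕ) (Q : List ℕ), Valid P → Valid Q → ∀ m,
    build m P = build m Q → P = Q
  | [], _, hP, _, _, _ => by obtain ⟨r, hr⟩ := hP; simp at hr
  | [u], _, hP, _, _, _ => by obtain ⟨r, hr⟩ := hP; simp at hr
  | _ :: _ :: _, [], _, hQ, _, _ => by obtain ⟨r, hr⟩ := hQ; simp at hr
  | _ :: _ :: _, [v], _, hQ, _, _ => by obtain ⟨r, hr⟩ := hQ; simp at hr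
  | [u, t], [u', t'], _, _, m, hEq => by
    rw [build_two, build_two] at hEq
    have hlen : u + 1 + t = u' + 1 + t' := by
      have := congrArg List.length hEq
      rwa [runW_length, runW_length] at this
    have huu : u = u' := by
      by_contra hne
      rcases lt_or_gt_of_ne hne with hlt | hgt
      · have ht : 1 ≤ t := by omega
        have v1 : gg (runW m u t) (u+1) = m + 1 := by rw [runW_getD (by omega)]; omega
        have v2 : gg (runW m u' t') (u+1) = m := by rw [runW_getD (by omega)]; omega
        rw [hEq] at v1; omega
      · have ht : 1 ≤ t' := by omega
        have v1 : gg (runW m u t) (u'+1) = m := by rw [runW_getD (by omega)]; omega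
        have v2 : gg (runW m u' t') (u'+1) = m + 1 := by rw [runW_getD (by omega)]; omega
        rw [hEq] at v1; omega
    have : t = t' := by omega
    rw [huu, this]
  | [u, t], u' :: d' :: s' :: rest', _, hQ, m, hEq => by
    rw [build_two, build_cons] at hEq
    exact absurd hEq (run_ne_consbuild m u t u' d' s' ((valid_cons_iff u' d' s').1 hQ))
  | u :: d :: s :: rest, [u', t'], hP, _, m, hEq => by
    rw [build_two, build_cons] at hEq
    exact absurd hEq.symm (run_ne_consbuild m u' t' u d s ((valid_cons_iff u d s).1 hP))
  | u :: d :: s :: rest, u' :: d' :: s' :: rest', hP, hQ, m, hEq => by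
    have hrP : Valid rest := (valid_cons_iff u d s).1 hP
    have hrQ : Valid rest' := (valid_cons_iff u' d' s').1 hQ
    rw [build_cons, build_cons] at hEq
    set T := d + 1 + s with hT
    set T' := d' + 1 + s' with hT'
    set A := u + 1 + T with hA
    set A' := u' + 1 + T' with hA'
    set w1 := build (m+d) rest with hw1
    set w2 := build (m+d') rest' with hw2
    have hL1 : 0 < w1.length := build_pos_len hrP (m+d)
    have hL2 : 0 < w2.length := build_pos_len hrQ (m+d')
    have hlen : A + w1.length = A' + w2.length := by
      have := congrArg List.length hEq
      rwa [List.length_append, List.length_append, runW_length, runW_length] at this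
    have hvL : ∀ i < A, gg (runW m u T ++ w1) i = m + (i - u) := by
      intro i hi
      rw [append_val_left (by rw [runW_length]; exact hi)]
      exact runW_getD hi
    have hvL' : ∀ i, A ≤ i → gg (runW m u T ++ w1) i = gg w1 (i - A) := by
      intro i hi
      rw [append_val_right (by rw [runW_length]; exact hi), runW_length]
    have hvR : ∀ i < A', gg (runW m u' T' ++ w2) i = m + (i - u') := by
      intro i hi
      rw [append_val_left (by rw [runW_length]; exact hi)]
      exact runW_getD hi
    have hvR' : ∀ i, A' ≤ i → gg (runW m u' T' ++ w2) i = gg w2 (i - A') := by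
      intro i hi
      rw [append_val_right (by rw [runW_length]; exact hi), runW_length]
    have h01 : gg w1 0 = m + d := build_getD_zero rest hrP (m+d)
    have h02 : gg w2 0 = m + d' := build_getD_zero rest' hrQ (m+d')
    -- u = u'
    have huu : u = u' := by
      by_contra hne
      rcases lt_or_gt_of_ne hne with hlt | hgt
      · have v1 : gg (runW m u T ++ w1) (u+1) = m + 1 := by
          rw [hvL (u+1) (by omega)]; omega
        have v2 : gg (runW m u' T' ++ w2) (u+1) = m := by
          rw [hvR (u+1) (by omega)]; omega
        rw [hEq] at v1; omega
      · have v1 : gg (runW m u T ++ w1) (u'+1) = m := by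
          rw [hvL (u'+1) (by omega)]; omega
        have v2 : gg (runW m u' T' ++ w2) (u'+1) = m + 1 := by
          rw [hvR (u'+1) (by omega)]; omega
        rw [hEq] at v1; omega
    -- T = T'
    have hTT : T = T' := by
      by_contra hne
      rcases lt_or_gt_of_ne hne with hlt | hgt
      · have v1 : gg (runW m u T ++ w1) A = m + d := by
          rw [hvL' A (le_refl A)]; simp only [Nat.sub_self]; exact h01
        have v2 : gg (runW m u' T' ++ w2) A = m + (A - u') := by
          rw [hvR A (by omega)]
        rw [hEq] at v1
        omega
      · have v1 : gg (runW m u T ++ w1) A' = m + (A' - u) := by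
          rw [hvL A' (by omega)]
        have v2 : gg (runW m u' T' ++ w2) A' = m + d' := by
          rw [hvR' A' (le_refl A')]; simp only [Nat.sub_self]; exact h02
        rw [hEq] at v1
        omega
    -- d = d'
    have hdd : d = d' := by
      have v1 : gg (runW m u T ++ w1) A = m + d := by
        rw [hvL' A (le_refl A)]; simp only [Nat.sub_self]; exact h01
      have v2 : gg (runW m u' T' ++ w2) A = m + d' := by
        rw [hvR' A (by omega)]
        have : A - A' = 0 := by omega
        rw [this]; exact h02
      rw [hEq] at v1
      omega
    have hss : s = s' := by omega
    -- rest = rest'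
    have hpre : runW m u T = runW m u' T' := by rw [huu, hTT]
    rw [hpre] at hEq
    have hw12 : build (m+d) rest = build (m+d') rest' := List.append_cancel_left hEq
    rw [hdd] at hw12
    have := build_inj rest rest' hrP hrQ (m+d') hw12
    rw [huu, hdd, hss, this]

lemma prefix_vals {w : List ℕ} (hs : StepOK w) (hnp : NoPat w) :
    ∀ p, p < w.length → (∀ i, i + 1 ≤ p → gg w i ≤ gg w (i+1)) →
    ∃ u ≤ p, ∀ i ≤ p, gg w i = gg w 0 + (i - u) := by
  intro p
  induction p with
  | zero => intro _ _; exact ⟨0, le_refl 0, fun i hi => by have : i = 0 := Nat.le_zero.mp hi; subst this; omega⟩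
  | succ p ih =>
    intro hp hmono
    obtain ⟨u, hu, hform⟩ := ih (by omega) (fun i hi => hmono i (by omega))
    have hnd : gg w p ≤ gg w (p+1) := hmono p (le_refl _)
    have hst : gg w (p+1) ≤ gg w p + 1 := hs p hp
    rcases eq_or_lt_of_le hnd with hEq | hLt
    · -- equal
      rcases eq_or_lt_of_le hu with hup | hup
      · -- u = p : all values m so far, extend u to p+1
        refine ⟨p+1, le_refl _, fun i hi => ?_⟩
        rcases Nat.lt_or_ge i (p+1) with hi' | hi'
        · have := hform i (by omega); omega
        · have hip : i = p+1 := by omega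
          have h1 := hform p (le_refl _)
          subst hip
          omega
      · -- u < p : NoPat violation
        exfalso
        have h1 := hform (p-1) (by omega)
        have h2 := hform p (le_refl _)
        exact hnp (p-1) (by omega) (by
          rw [show p - 1 + 1 = p by omega, show p - 1 + 2 = p + 1 by omega]
          exact ⟨by omega, by omega⟩)
    · -- strict increase by exactly 1
      refine ⟨u, by omega, fun i hi => ?_⟩
      rcases Nat.lt_or_ge i (p+1) with hi' | hi'
      · exact hform i (by omega)
      · have hip : i = p+1 := by omega
        have h2 := hform p (le_refl _)
        subst hip
        omega

lemma complete : ∀ (n : ℕ) (w : List ℕ), w.length = n → w ≠ [] → StepOK w → NoPat w →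
    IsFlattened w → ∃ P, Valid P ∧ build (gg w 0) P = w := by
  intro n
  induction n using Nat.strong_induction_on with
  | _ n IH =>
    intro w hlen hne hs hnp hfl
    have hn : 1 ≤ n := by
      rw [← hlen]; exact List.length_pos_iff.2 hne
    set m := gg w 0 with hm
    by_cases hD : ∃ p, p + 1 < w.length ∧ gg w (p+1) < gg w p
    · -- there is a descent
      have hp := Nat.find_spec hD
      set p := Nat.find hD with hpdef
      have hmin : ∀ q, q < p → ¬(q + 1 < w.length ∧ gg w (q+1) < gg w q) :=
        fun q hq => Nat.find_min hD hq
      obtain ⟨u, hu, hform⟩ := prefix_vals hs hnp p (by omega) (by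
        intro i hi
        have := hmin i (by omega)
        push_neg at this
        rcases Nat.lt_or_ge (i+1) w.length with h1 | h1
        · exact this h1
        · omega)
      -- flattened gives descent lands at ≥ m
      have hrs0 : RunStart w 0 := ⟨by omega, Or.inl rfl⟩
      have hrsp : RunStart w (p+1) := ⟨by omega, Or.inr (by
        change gg w (p+1) < gg w (p+1-1)
        rw [show p+1-1 = p from rfl]
        exact hp.2)⟩
      have hmd : m ≤ gg w (p+1) := hfl 0 (p+1) hrs0 hrsp (by omega)
      set T := p - u with hT
      have hgp : gg w p = m + T := hform p (le_refl _)
      have hT1 : 1 ≤ T := by omega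
      set d := gg w (p+1) - m with hd
      have hdT : d ≤ T - 1 := by omega
      set s := T - 1 - d with hsdef
      have hds : d + 1 + s = T := by omega
      set w' := w.drop (p+1) with hw'
      have hlen' : w'.length = n - (p+1) := by rw [hw', List.length_drop, hlen]
      have hval' : ∀ i, gg w' i = gg w (p+1+i) := fun i => gg_drop w (p+1) i
      have hne' : w' ≠ [] := by
        apply List.ne_nil_of_length_pos
        omega
      have hs' : StepOK w' := by
        intro i hi
        rw [hval' i, hval' (i+1), show p+1+(i+1) = (p+1+i)+1 by ring]
        exact hs (p+1+i) (by omega)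
      have hnp' : NoPat w' := by
        intro i hi
        rw [hval' i, hval' (i+1), hval' (i+2),
          show p+1+(i+1) = (p+1+i)+1 by ring, show p+1+(i+2) = (p+1+i)+2 by ring]
        exact hnp (p+1+i) (by omega)
      have hrs' : ∀ i, RunStart w' i → RunStart w (p+1+i) := by
        rintro i ⟨hil, h0 | hdsc⟩
        · subst h0
          simpa using hrsp
        · change gg w' i < gg w' (i-1) at hdsc
          rcases Nat.eq_zero_or_pos i with rfl | hipos
          · exact absurd hdsc (by simp)
          · refine ⟨by omega, Or.inr ?_⟩
            change gg w (p+1+i) < gg w (p+1+i-1)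
            rw [hval' i, hval' (i-1)] at hdsc
            rwa [show p+1+(i-1) = p+1+i-1 by omega] at hdsc
      have hfl' : IsFlattened w' := by
        intro i j hi hj hij
        have := hfl (p+1+i) (p+1+j) (hrs' i hi) (hrs' j hj) (by omega)
        change gg w (p+1+i) ≤ gg w (p+1+j) at this
        change gg w' i ≤ gg w' j
        rw [hval' i, hval' j]
        exact this
      obtain ⟨P', hP', hbuild'⟩ := IH (n - (p+1)) (by omega) w' hlen' hne' hs' hnp' hfl'
      have h0' : gg w' 0 = m + d := by
        rw [hval' 0, show p+1+0 = p+1 from rfl]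
        omega
      have hb2 : build (m + d) P' = w' := by rw [← h0']; exact hbuild'
      refine ⟨u :: d :: s :: P', valid_cons u d s hP', ?_⟩
      rw [build_cons, hds, hb2]
      -- show runW m u T ++ w' = w
      symm
      have hup : u + 1 + T = p + 1 := by omega
      apply listext
      · rw [List.length_append, runW_length, hlen', hup, hlen]
        omega
      · intro i hi
        rw [hlen] at hi
        rcases Nat.lt_or_ge i (p+1) with hi' | hi'
        · rw [append_val_left (by rw [runW_length]; omega), runW_getD (by omega)]
          exact hform i (by omega)
        · rw [append_val_right (by rw [runW_length]; omega), runW_length, hup]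
          rw [hval' (i - (p+1))]
          congr 1
          omega
    · -- no descent
      push_neg at hD
      obtain ⟨u, hu, hform⟩ := prefix_vals hs hnp (n-1) (by omega) (by
        intro i hi
        exact hD i (by omega))
      refine ⟨[u, n-1-u], valid_two _ _, ?_⟩
      rw [build_two]
      symm
      apply listext
      · rw [runW_length, hlen]; omega
      · intro i hi
        rw [hlen] at hi
        rw [runW_getD (by omega)]
        exact hform i (by omega)

def tuples : ℕ → ℕ → Finset (List ℕ)
  | 0, n => if n = 0 then {[]} else ∅
  | k+1, n => (Finset.range (n+1)).biUnion fun a => (tuples k (n-a)).image (a :: ·)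

lemma mem_tuples : ∀ k n P, P ∈ tuples k n ↔ P.length = k ∧ P.sum = n := by
  intro k
  induction k with
  | zero =>
    intro n P
    unfold tuples
    constructor
    · intro h
      split at h
      · next hn =>
        subst hn
        have := Finset.mem_singleton.1 h
        subst this
        exact ⟨rfl, rfl⟩
      · simp at h
    · rintro ⟨h1, h2⟩
      have hP : P = [] := List.length_eq_zero_iff.mp h1
      subst hP
      have hn : n = 0 := by simp at h2; omega
      subst hn
      rw [if_pos rfl]
      exact Finset.mem_singleton_self _
  | succ k ih =>
    intro n P
    unfold tuples
    simp only [Finset.mem_biUnion, Finset.mem_range, Finset.mem_image]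
    constructor
    · rintro ⟨a, ha, Q, hQ, rfl⟩
      obtain ⟨hlen, hsum⟩ := (ih _ Q).1 hQ
      refine ⟨by simp [hlen], by simp [hsum]; omega⟩
    · rintro ⟨hlen, hsum⟩
      rcases P with _ | ⟨a, Q⟩
      · simp at hlen
      · refine ⟨a, by simp at hsum; omega, Q, (ih _ Q).2 ⟨by simpa using hlen, by simp at hsum; omega⟩, rfl⟩

lemma sum_choose_shift (k : ℕ) : ∀ n, ∑ j ∈ Finset.range (n+1), (j+k).choose k = (n+k+1).choose (k+1) := by
  intro n
  induction n with
  | zero => simp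
  | succ n ih =>
    rw [Finset.sum_range_succ, ih, show n+1+k = n+k+1 by ring]
    have hp := Nat.choose_succ_succ (n+k+1) k
    simp only [Nat.succ_eq_add_one] at hp
    omega

lemma tuples_disj (k n : ℕ) {a a' : ℕ} (h : a ≠ a') :
    Disjoint ((tuples k (n-a)).image (a :: ·)) ((tuples k (n-a')).image (a' :: ·)) := by
  rw [Finset.disjoint_left]
  rintro P hP hP'
  obtain ⟨Q, _, rfl⟩ := Finset.mem_image.1 hP
  obtain ⟨Q', _, hE⟩ := Finset.mem_image.1 hP'
  exact h (List.head_eq_of_cons_eq hE).symm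

lemma tuples_card : ∀ k n, (tuples (k+1) n).card = (n + k).choose k := by
  intro k
  induction k with
  | zero =>
    intro n
    unfold tuples
    rw [Finset.card_biUnion (fun x _ y _ hxy => tuples_disj 0 n hxy)]
    have : ∀ a ∈ Finset.range (n+1), ((tuples 0 (n-a)).image (a :: ·)).card
        = if n - a = 0 then 1 else 0 := by
      intro a _
      rw [Finset.card_image_of_injective _ (fun x y h => List.tail_eq_of_cons_eq h)]
      unfold tuples
      split <;> simp
    rw [Finset.sum_congr rfl this]
    simp only [Nat.choose_zero_right]
    have h2 : ∀ a ∈ Finset.range (n+1), (if n - a = 0 then 1 else 0) = (if a = n then 1 else 0) := by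
      intro a ha
      rw [Finset.mem_range] at ha
      rcases eq_or_ne a n with rfl | h
      · simp
      · rw [if_neg h, if_neg (by omega)]
    rw [Finset.sum_congr rfl h2, Finset.sum_ite_eq' (Finset.range (n+1)) n (fun _ => 1)]
    simp
  | succ k ih =>
    intro n
    unfold tuples
    rw [Finset.card_biUnion (fun x _ y _ hxy => tuples_disj (k+1) n hxy)]
    have : ∀ a ∈ Finset.range (n+1), ((tuples (k+1) (n-a)).image (a :: ·)).card
        = ((n-a) + k).choose k := by
      intro a _
      rw [Finset.card_image_of_injective _ (fun x y h => List.tail_eq_of_cons_eq h), ih]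
    rw [Finset.sum_congr rfl this, ← Finset.sum_range_reflect]
    have h2 : ∀ j ∈ Finset.range (n+1), ((n - (n + 1 - 1 - j)) + k).choose k = (j + k).choose k := by
      intro j hj
      rw [Finset.mem_range] at hj
      congr 1
      omega
    rw [Finset.sum_congr rfl h2, sum_choose_shift, show n+(k+1) = n+k+1 by ring]

lemma occAt_iff (w : List ℕ) (i : ℕ) :
    OccAt [1,2,2] w i ↔ i + 3 ≤ w.length ∧ gg w i < gg w (i+1) ∧ gg w (i+1) = gg w (i+2) := by
  unfold OccAt
  have hl3 : ([1,2,2] : List ℕ).length = 3 := rfl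
  rw [hl3]
  unfold gg
  simp only [List.getD_eq_getElem?_getD]
  have g0 : (([1,2,2] : List ℕ)[(0:ℕ)]?).getD 0 = 1 := rfl
  have g1 : (([1,2,2] : List ℕ)[(1:ℕ)]?).getD 0 = 2 := rfl
  have g2 : (([1,2,2] : List ℕ)[(2:ℕ)]?).getD 0 = 2 := rfl
  constructor
  · rintro ⟨hl, h⟩
    have h01 := h 0 (by norm_num) 1 (by norm_num)
    have h12 := h 1 (by norm_num) 2 (by norm_num)
    have h21 := h 2 (by norm_num) 1 (by norm_num)
    rw [g0, g1, show i+0 = i from rfl] at h01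
    rw [g1, g2] at h12
    rw [g2, g1] at h21
    norm_num at h01 h12 h21
    exact ⟨hl, h01, by omega⟩
  · rintro ⟨hl, h1, h2⟩
    refine ⟨hl, ?_⟩
    intro s hs t ht
    interval_cases s <;> interval_cases t <;>
      simp only [g0, g1, g2, show i+0 = i from rfl] <;> norm_num <;> omega

lemma numOcc_zero_iff (w : List ℕ) : numOcc [1,2,2] w = 0 ↔ NoPat w := by
  unfold numOcc
  have hfin : {i | OccAt [1,2,2] w i}.Finite := by
    apply Set.Finite.subset (Set.finite_Iio w.length)
    intro i hi
    have := ((occAt_iff w i).1 hi).1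
    simp only [Set.mem_Iio]
    omega
  rw [Set.ncard_eq_zero hfin, Set.eq_empty_iff_forall_notMem]
  constructor
  · intro h i hi2 hpat
    exact h i ((occAt_iff w i).2 ⟨by omega, hpat.1, hpat.2⟩)
  · intro h i hi
    obtain ⟨h3, hlt, heq⟩ := (occAt_iff w i).1 hi
    exact h i (by omega) ⟨hlt, heq⟩


/-- For every `n ≥ 1`, the number of flattened Catalan words of length `n`
avoiding the consecutive pattern `122` is `Σ_{r=0}^{⌊(n−1)/2⌋} C(n+r, 3r+1)`. -/
theorem avoid_122 (n : ℕ) (hn : 1 ≤ n) :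
    {w ∈ FlatCat n | numOcc [1, 2, 2] w = 0}.ncard
      = ∑ r ∈ Finset.range ((n - 1) / 2 + 1), Nat.choose (n + r) (3 * r + 1) := by
  classical
  set R := (n-1)/2 + 1 with hR
  set FF : Finset (List ℕ) :=
    (Finset.range R).biUnion (fun r => (tuples (3*r+2) (n - (2*r+1))).image (build 1)) with hFF
  have hset : {w ∈ FlatCat n | numOcc [1, 2, 2] w = 0} = ↑FF := by
    ext w
    simp only [Set.mem_setOf_eq, Finset.coe_biUnion, Set.mem_iUnion, Finset.mem_coe,
      Finset.mem_image, Finset.mem_range, FlatCat, hFF, Finset.mem_biUnion]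
    constructor
    · rintro ⟨⟨hlen, hcat, hfl⟩, hocc⟩
      obtain ⟨hne, h0, hsteps⟩ := hcat
      have hs : StepOK w := fun i hi => (hsteps i hi).2
      have hnp : NoPat w := (numOcc_zero_iff w).1 hocc
      obtain ⟨P, hPval, hb⟩ := complete n w hlen hne hs hnp hfl
      obtain ⟨r, hr⟩ := hPval
      have h0' : gg w 0 = 1 := h0
      rw [h0'] at hb
      have hlenP := build_length P 1 r hr
      rw [hb, hlen] at hlenP
      exact ⟨r, by omega, P, (mem_tuples _ _ P).2 ⟨hr, by omega⟩, hb⟩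
    · rintro ⟨r, hrR, P, hPmem, rfl⟩
      obtain ⟨hlenP, hsumP⟩ := (mem_tuples _ _ P).1 hPmem
      have hval : Valid P := ⟨r, hlenP⟩
      have hr2 : 2*r+1 ≤ n := by omega
      obtain ⟨hge, hs, hnp, hfl⟩ := build_sound P hval 1
      have hlenw : (build 1 P).length = n := by
        rw [build_length P 1 r hlenP]; omega
      refine ⟨⟨hlenw, ⟨build_ne_nil hval 1, build_getD_zero P hval 1, ?_⟩, hfl⟩,
        (numOcc_zero_iff _).2 hnp⟩
      intro i hi
      exact ⟨hge (i+1) hi, hs i hi⟩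
  rw [hset, Set.ncard_coe_finset, hFF]
  rw [Finset.card_biUnion]
  · apply Finset.sum_congr rfl
    intro r hr
    rw [Finset.mem_range] at hr
    have hr2 : 2*r+1 ≤ n := by omega
    rw [Finset.card_image_of_injOn (fun P hP Q hQ hEq => by
      obtain ⟨hlP, _⟩ := (mem_tuples _ _ P).1 hP
      obtain ⟨hlQ, _⟩ := (mem_tuples _ _ Q).1 hQ
      exact build_inj P Q ⟨r, hlP⟩ ⟨r, hlQ⟩ 1 hEq)]
    rw [show 3*r+2 = (3*r+1)+1 by ring, tuples_card (3*r+1) (n - (2*r+1)),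
      show n - (2*r+1) + (3*r+1) = n + r by omega]
  · intro x hx y hy hxy
    rw [Function.onFun, Finset.disjoint_left]
    rintro w hw hw'
    obtain ⟨P, hPmem, rfl⟩ := Finset.mem_image.1 hw
    obtain ⟨Q, hQmem, hEq⟩ := Finset.mem_image.1 hw'
    obtain ⟨hlP, _⟩ := (mem_tuples _ _ P).1 hPmem
    obtain ⟨hlQ, _⟩ := (mem_tuples _ _ Q).1 hQmem
    have := build_inj Q P ⟨y, hlQ⟩ ⟨x, hlP⟩ 1 hEq
    apply hxy
    rw [← this] at hlP
    omega
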